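/- Strong duality for the relaxed problem: let h_ε = h̄ χ_{W_ε} minimize Iᶜ_ε over {h : 0 ≤ h ≤ h̄}, and define u_ε = (1/ε)(⟨h_ε⟩_x − f), v_ε = (1/ε)(⟨h_ε⟩_y − g), w_ε = min{c + u_ε + v_ε, 0}. Then Iᶜ_ε(h_ε) = Jᵉ(u_ε, v_ε, w_ε), where Jᵉ(u,v,w) = −∫uf − ∫vg + ∬ w h̄ − (ε/2)‖u‖²_{L²} − (ε/2)‖v‖²_{L²}; moreover (u_ε, v_ε, w_ε) maximizes Jᵉ over all triples with u + v − w + c ≥ 0 and w ≤ 0. -/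

import Mathlib

open MeasureTheory

/-- The relaxed (penalized) transport cost
`Iᶜ_ε(h) = ∬ c h + (1/(2ε))‖⟨h⟩ₓ − f‖²_{L²} + (1/(2ε))‖⟨h⟩_y − g‖²_{L²}`. -/
noncomputable def relaxedCost (m n : ℕ) (ε : ℝ)
    (c : (Fin m → ℝ) × (Fin n → ℝ) → ℝ)
    (f : (Fin m → ℝ) → ℝ) (g : (Fin n → ℝ) → ℝ)
    (h : (Fin m → ℝ) × (Fin n → ℝ) → ℝ) : ℝ :=
  (∫ p, c p * h p)
    + (1 / (2 * ε)) * (∫ x, ((∫ y, h (x, y)) - f x) ^ 2)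
    + (1 / (2 * ε)) * (∫ y, ((∫ x, h (x, y)) - g y) ^ 2)

/-- The relaxed dual functional
`Jᵉ(u,v,w) = −∫uf − ∫vg + ∬wh̄ − (ε/2)‖u‖²_{L²} − (ε/2)‖v‖²_{L²}`. -/
noncomputable def relaxedDual (m n : ℕ) (ε : ℝ)
    (hbar : (Fin m → ℝ) × (Fin n → ℝ) → ℝ)
    (f : (Fin m → ℝ) → ℝ) (g : (Fin n → ℝ) → ℝ)
    (u : (Fin m → ℝ) → ℝ) (v : (Fin n → ℝ) → ℝ)
    (w : (Fin m → ℝ) × (Fin n → ℝ) → ℝ) : ℝ :=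
  -(∫ x, u x * f x) - (∫ y, v y * g y) + (∫ p, w p * hbar p)
    - (ε / 2) * (∫ x, (u x) ^ 2) - (ε / 2) * (∫ y, (v y) ^ 2)


/-- Fubini: pull a function of the first coordinate out of a product integral. -/
lemma fubini_fst' {α β : Type*} [MeasureSpace α] [MeasureSpace β]
    [SFinite (volume : Measure α)] [SFinite (volume : Measure β)]
    (F : α → ℝ) (h : α × β → ℝ) (hint : Integrable (fun p => F p.1 * h p)) :
    ∫ p, F p.1 * h p = ∫ x, F x * ∫ y, h (x, y) := by
  have h1 : ∫ p, F p.1 * h p = ∫ x, ∫ y, F x * h (x, y) :=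
    MeasureTheory.integral_prod _ hint
  rw [h1]
  congr 1
  funext x
  exact integral_const_mul _ _

lemma fubini_snd' {α β : Type*} [MeasureSpace α] [MeasureSpace β]
    [SFinite (volume : Measure α)] [SFinite (volume : Measure β)]
    (G : β → ℝ) (h : α × β → ℝ) (hint : Integrable (fun p => G p.2 * h p)) :
    ∫ p, G p.2 * h p = ∫ y, G y * ∫ x, h (x, y) := by
  have h1 : ∫ p, G p.2 * h p = ∫ y, ∫ x, G y * h (x, y) :=
    MeasureTheory.integral_prod_symm _ hint
  rw [h1]
  congr 1
  funext y
  exact integral_const_mul _ _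

/-- If `0 ≤ A + t B`-ish along small `t`, then `0 ≤ A`. -/
lemma nonneg_of_quadratic {A B : ℝ} (hB : 0 ≤ B)
    (h : ∀ t : ℝ, 0 < t → t ≤ 1 → 0 ≤ t * A + t ^ 2 * B) : 0 ≤ A := by
  by_contra hA
  push_neg at hA
  have ht0 : 0 < min 1 (-A / (2 * (B + 1))) := by
    exact lt_min one_pos (div_pos (by linarith) (by positivity))
  have ht1 : min 1 (-A / (2 * (B + 1))) ≤ 1 := min_le_left _ _
  have := h _ ht0 ht1
  set t := min 1 (-A / (2 * (B + 1))) with htdef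
  have h2 : t ≤ -A / (2 * (B + 1)) := min_le_right _ _
  have h3 : t * B ≤ (-A / (2 * (B + 1))) * B := by
    apply mul_le_mul_of_nonneg_right h2 hB
  have h4 : (-A / (2 * (B + 1))) * B < -A := by
    rw [div_mul_eq_mul_div, div_lt_iff₀ (by positivity)]
    nlinarith
  nlinarith [sq_nonneg t, ht0.le, mul_le_mul_of_nonneg_left ht1 ht0.le]

set_option maxHeartbeats 2000000 in
/-- Strong duality for the relaxed problem: if `h_ε = h̄ χ_{W_ε}` minimizes
`Iᶜ_ε` over `{h : 0 ≤ h ≤ h̄}` and `u_ε = (1/ε)(⟨h_ε⟩ₓ − f)`, `v_ε = (1/ε)(⟨h_ε⟩_y − g)`,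
`w_ε = min{c + u_ε + v_ε, 0}`, then `Iᶜ_ε(h_ε) = Jᵉ(u_ε,v_ε,w_ε)` and `(u_ε,v_ε,w_ε)`
maximizes `Jᵉ` over all dual-feasible triples. -/
theorem relaxed_strong_duality (m n : ℕ) (ε : ℝ) (hε : 0 < ε)
    (hbar c : (Fin m → ℝ) × (Fin n → ℝ) → ℝ)
    (f : (Fin m → ℝ) → ℝ) (g : (Fin n → ℝ) → ℝ)
    (hbar_meas : Measurable hbar) (hbar_nonneg : ∀ p, 0 ≤ hbar p)
    (hbar_bdd : ∃ C, ∀ p, hbar p ≤ C) (hbar_supp : HasCompactSupport hbar)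
    (f_meas : Measurable f) (f_nonneg : ∀ x, 0 ≤ f x)
    (f_int : Integrable f) (f_mass : ∫ x, f x = 1)
    (f_sq_int : Integrable (fun x => (f x) ^ 2))
    (g_meas : Measurable g) (g_nonneg : ∀ y, 0 ≤ g y)
    (g_int : Integrable g) (g_mass : ∫ y, g y = 1)
    (g_sq_int : Integrable (fun y => (g y) ^ 2))
    (c_locint : LocallyIntegrable c)
    (Γne : ∃ h0 : (Fin m → ℝ) × (Fin n → ℝ) → ℝ, Measurable h0 ∧
      (∀ᵐ p, 0 ≤ h0 p ∧ h0 p ≤ hbar p) ∧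
      (∀ᵐ x, (∫ y, h0 (x, y)) = f x) ∧ (∀ᵐ y, (∫ x, h0 (x, y)) = g y))
    (Wε : Set ((Fin m → ℝ) × (Fin n → ℝ))) (Wε_meas : MeasurableSet Wε)
    (Wε_sub : Wε ⊆ tsupport hbar)
    (hepsfn : (Fin m → ℝ) × (Fin n → ℝ) → ℝ)
    (heps_def : hepsfn = Wε.indicator hbar)
    (heps_min : ∀ h : (Fin m → ℝ) × (Fin n → ℝ) → ℝ, Measurable h →
      (∀ᵐ p, 0 ≤ h p ∧ h p ≤ hbar p) →
      relaxedCost m n ε c f g hepsfn ≤ relaxedCost m n ε c f g h)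
    (uε : (Fin m → ℝ) → ℝ) (vε : (Fin n → ℝ) → ℝ)
    (wε : (Fin m → ℝ) × (Fin n → ℝ) → ℝ)
    (uε_def : ∀ x, uε x = (1 / ε) * ((∫ y, hepsfn (x, y)) - f x))
    (vε_def : ∀ y, vε y = (1 / ε) * ((∫ x, hepsfn (x, y)) - g y))
    (wε_def : ∀ p, wε p = min (c p + uε p.1 + vε p.2) 0) :
    relaxedCost m n ε c f g hepsfn = relaxedDual m n ε hbar f g uε vε wε ∧
      ∀ (u : (Fin m → ℝ) → ℝ) (v : (Fin n → ℝ) → ℝ)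
        (w : (Fin m → ℝ) × (Fin n → ℝ) → ℝ),
        Measurable u → Measurable v → Measurable w →
        Integrable (fun x => (u x) ^ 2) → Integrable (fun y => (v y) ^ 2) →
        Integrable (fun x => u x * f x) → Integrable (fun y => v y * g y) →
        Integrable (fun p => w p * hbar p) →
        (∀ᵐ p : (Fin m → ℝ) × (Fin n → ℝ), 0 ≤ u p.1 + v p.2 - w p + c p) →
        (∀ᵐ p : (Fin m → ℝ) × (Fin n → ℝ), w p ≤ 0) →
        relaxedDual m n ε hbar f g u v w ≤ relaxedDual m n ε hbar f g uε vε wε := by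
  classical
  obtain ⟨C, hC⟩ := hbar_bdd
  have hC0 : 0 ≤ C := le_trans (hbar_nonneg (fun _ => 0, fun _ => 0)) (hC _)
  set K : Set ((Fin m → ℝ) × (Fin n → ℝ)) := tsupport hbar with hKdef
  have hKcl : IsClosed K := isClosed_tsupport hbar
  have hKcpt : IsCompact K := hbar_supp
  set K1 : Set (Fin m → ℝ) := Prod.fst '' K with hK1def
  set K2 : Set (Fin n → ℝ) := Prod.snd '' K with hK2def
  have hK1cpt : IsCompact K1 := hKcpt.image continuous_fst
  have hK2cpt : IsCompact K2 := hKcpt.image continuous_snd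
  have hK1m : MeasurableSet K1 := hK1cpt.isClosed.measurableSet
  have hK2m : MeasurableSet K2 := hK2cpt.isClosed.measurableSet
  have hbar0 : ∀ p, p ∉ K → hbar p = 0 := fun p hp => image_eq_zero_of_notMem_tsupport hp
  -- indicator integrability
  have ind1_int : Integrable (K1.indicator (fun _ => (1:ℝ))) :=
    ((integrableOn_const_iff).mpr (Or.inr hK1cpt.measure_lt_top)).integrable_indicator hK1m
  have ind2_int : Integrable (K2.indicator (fun _ => (1:ℝ))) :=
    ((integrableOn_const_iff).mpr (Or.inr hK2cpt.measure_lt_top)).integrable_indicator hK2m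
  have indC1_int : Integrable (K1.indicator (fun _ => C)) :=
    ((integrableOn_const_iff).mpr (Or.inr hK1cpt.measure_lt_top)).integrable_indicator hK1m
  have indC2_int : Integrable (K2.indicator (fun _ => C)) :=
    ((integrableOn_const_iff).mpr (Or.inr hK2cpt.measure_lt_top)).integrable_indicator hK2m
  -- pointwise domination of hbar
  have hbar_le : ∀ p : (Fin m → ℝ) × (Fin n → ℝ),
      hbar p ≤ K1.indicator (fun _ => (1:ℝ)) p.1 * K2.indicator (fun _ => C) p.2 := by
    intro p
    by_cases hp : p ∈ K
    · have h1 : p.1 ∈ K1 := Set.mem_image_of_mem Prod.fst hp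
      have h2 : p.2 ∈ K2 := Set.mem_image_of_mem Prod.snd hp
      rw [Set.indicator_of_mem h1, Set.indicator_of_mem h2, one_mul]
      exact hC p
    · rw [hbar0 p hp]
      exact mul_nonneg (Set.indicator_apply_nonneg fun _ => zero_le_one)
        (Set.indicator_apply_nonneg fun _ => hC0)
  have hbar_int : Integrable hbar := by
    refine (ind1_int.mul_prod indC2_int).mono' hbar_meas.aestronglyMeasurable ?_
    filter_upwards with p
    rw [Real.norm_eq_abs, abs_of_nonneg (hbar_nonneg p)]
    exact hbar_le p
  -- fiberwise integrability
  have fiber_int : ∀ (h : (Fin m → ℝ) × (Fin n → ℝ) → ℝ), Measurable h →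
      (∀ p, |h p| ≤ hbar p) → ∀ x, Integrable (fun y => h (x, y)) := by
    intro h hm hb x
    refine indC2_int.mono' (hm.comp measurable_prodMk_left).aestronglyMeasurable ?_
    filter_upwards with y
    rw [Real.norm_eq_abs]
    refine (hb _).trans ?_
    by_cases hp : (x, y) ∈ K
    · rw [Set.indicator_of_mem (Set.mem_image_of_mem Prod.snd hp)]; exact hC _
    · rw [hbar0 _ hp]
      exact Set.indicator_apply_nonneg fun _ => hC0
  have fiber_int' : ∀ (h : (Fin m → ℝ) × (Fin n → ℝ) → ℝ), Measurable h →
      (∀ p, |h p| ≤ hbar p) → ∀ y, Integrable (fun x => h (x, y)) := by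
    intro h hm hb y
    refine indC1_int.mono' (hm.comp (measurable_id.prodMk measurable_const)).aestronglyMeasurable ?_
    filter_upwards with x
    rw [Real.norm_eq_abs]
    refine (hb _).trans ?_
    by_cases hp : (x, y) ∈ K
    · rw [Set.indicator_of_mem (Set.mem_image_of_mem Prod.fst hp)]; exact hC _
    · rw [hbar0 _ hp]
      exact Set.indicator_apply_nonneg fun _ => hC0

  -- SECTION B: marginals
  set M : ℝ := C * (volume K2).toReal with hMdef
  set M' : ℝ := C * (volume K1).toReal with hM'def
  have hM0 : 0 ≤ M := mul_nonneg hC0 ENNReal.toReal_nonneg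
  have hM'0 : 0 ≤ M' := mul_nonneg hC0 ENNReal.toReal_nonneg
  have marg_meas : ∀ (h : (Fin m → ℝ) × (Fin n → ℝ) → ℝ), Measurable h →
      Measurable (fun x => ∫ y, h (x, y)) := by
    intro h hm
    have h1 : StronglyMeasurable (Function.uncurry fun x y => h (x, y)) := hm.stronglyMeasurable
    exact h1.integral_prod_right.measurable
  have marg_meas' : ∀ (h : (Fin m → ℝ) × (Fin n → ℝ) → ℝ), Measurable h →
      Measurable (fun y => ∫ x, h (x, y)) := by
    intro h hm
    have h1 : StronglyMeasurable (Function.uncurry fun x y => h (x, y)) := hm.stronglyMeasurable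
    exact h1.integral_prod_left.measurable
  have marg_bd : ∀ (h : (Fin m → ℝ) × (Fin n → ℝ) → ℝ), Measurable h →
      (∀ p, |h p| ≤ hbar p) →
      ∀ x, |∫ y, h (x, y)| ≤ M * K1.indicator (fun _ => (1:ℝ)) x := by
    intro h hm hb x
    by_cases hx : x ∈ K1
    · rw [Set.indicator_of_mem hx, mul_one]
      calc |∫ y, h (x, y)| ≤ ∫ y, |h (x, y)| := by simpa [Real.norm_eq_abs] using norm_integral_le_integral_norm (fun y => h (x, y))
        _ ≤ ∫ y, K2.indicator (fun _ => C) y := by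
            refine integral_mono (fiber_int h hm hb x).abs indC2_int fun y => ?_
            refine (hb _).trans ?_
            by_cases hp : (x, y) ∈ K
            · rw [Set.indicator_of_mem (Set.mem_image_of_mem Prod.snd hp)]; exact hC _
            · rw [hbar0 _ hp]
              exact Set.indicator_apply_nonneg fun _ => hC0
        _ = M := by
            rw [integral_indicator_const C hK2m, smul_eq_mul, hMdef, mul_comm, measureReal_def]
    · rw [Set.indicator_of_notMem hx, mul_zero]
      have hz : ∀ y, h (x, y) = 0 := by
        intro y
        have hK' : (x, y) ∉ K := fun hk => hx (Set.mem_image_of_mem Prod.fst hk)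
        have h0 : |h (x, y)| ≤ 0 := (hb _).trans_eq (hbar0 _ hK')
        exact abs_eq_zero.mp (le_antisymm h0 (abs_nonneg _))
      have : (∫ y, h (x, y)) = 0 := by simp [hz]
      rw [this, abs_zero]
  have marg_bd' : ∀ (h : (Fin m → ℝ) × (Fin n → ℝ) → ℝ), Measurable h →
      (∀ p, |h p| ≤ hbar p) →
      ∀ y, |∫ x, h (x, y)| ≤ M' * K2.indicator (fun _ => (1:ℝ)) y := by
    intro h hm hb y
    by_cases hy : y ∈ K2
    · rw [Set.indicator_of_mem hy, mul_one]
      calc |∫ x, h (x, y)| ≤ ∫ x, |h (x, y)| := by simpa [Real.norm_eq_abs] using norm_integral_le_integral_norm (fun x => h (x, y))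
        _ ≤ ∫ x, K1.indicator (fun _ => C) x := by
            refine integral_mono (fiber_int' h hm hb y).abs indC1_int fun x => ?_
            refine (hb _).trans ?_
            by_cases hp : (x, y) ∈ K
            · rw [Set.indicator_of_mem (Set.mem_image_of_mem Prod.fst hp)]; exact hC _
            · rw [hbar0 _ hp]
              exact Set.indicator_apply_nonneg fun _ => hC0
        _ = M' := by
            rw [integral_indicator_const C hK1m, smul_eq_mul, hM'def, mul_comm, measureReal_def]
    · rw [Set.indicator_of_notMem hy, mul_zero]
      have hz : ∀ x, h (x, y) = 0 := by
        intro x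
        have hK' : (x, y) ∉ K := fun hk => hy (Set.mem_image_of_mem Prod.snd hk)
        have h0 : |h (x, y)| ≤ 0 := (hb _).trans_eq (hbar0 _ hK')
        exact abs_eq_zero.mp (le_antisymm h0 (abs_nonneg _))
      have : (∫ x, h (x, y)) = 0 := by simp [hz]
      rw [this, abs_zero]
  have marg_int : ∀ (h : (Fin m → ℝ) × (Fin n → ℝ) → ℝ), Measurable h →
      (∀ p, |h p| ≤ hbar p) → Integrable (fun x => ∫ y, h (x, y)) := by
    intro h hm hb
    refine (ind1_int.const_mul M).mono' (marg_meas h hm).aestronglyMeasurable ?_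
    filter_upwards with x
    rw [Real.norm_eq_abs]
    exact marg_bd h hm hb x
  have marg_int' : ∀ (h : (Fin m → ℝ) × (Fin n → ℝ) → ℝ), Measurable h →
      (∀ p, |h p| ≤ hbar p) → Integrable (fun y => ∫ x, h (x, y)) := by
    intro h hm hb
    refine (ind2_int.const_mul M').mono' (marg_meas' h hm).aestronglyMeasurable ?_
    filter_upwards with y
    rw [Real.norm_eq_abs]
    exact marg_bd' h hm hb y
  have marg_sq_int : ∀ (h : (Fin m → ℝ) × (Fin n → ℝ) → ℝ), Measurable h →
      (∀ p, |h p| ≤ hbar p) → Integrable (fun x => (∫ y, h (x, y)) ^ 2) := by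
    intro h hm hb
    refine (ind1_int.const_mul (M ^ 2)).mono'
      ((marg_meas h hm).pow_const 2).aestronglyMeasurable ?_
    filter_upwards with x
    rw [Real.norm_eq_abs, abs_of_nonneg (sq_nonneg _)]
    have h1 := marg_bd h hm hb x
    by_cases hx : x ∈ K1
    · rw [Set.indicator_of_mem hx, mul_one] at h1 ⊢
      nlinarith [abs_nonneg (∫ y, h (x, y)), sq_abs (∫ y, h (x, y))]
    · rw [Set.indicator_of_notMem hx, mul_zero] at h1 ⊢
      nlinarith [abs_nonneg (∫ y, h (x, y)), sq_abs (∫ y, h (x, y))]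
  have marg_sq_int' : ∀ (h : (Fin m → ℝ) × (Fin n → ℝ) → ℝ), Measurable h →
      (∀ p, |h p| ≤ hbar p) → Integrable (fun y => (∫ x, h (x, y)) ^ 2) := by
    intro h hm hb
    refine (ind2_int.const_mul (M' ^ 2)).mono'
      ((marg_meas' h hm).pow_const 2).aestronglyMeasurable ?_
    filter_upwards with y
    rw [Real.norm_eq_abs, abs_of_nonneg (sq_nonneg _)]
    have h1 := marg_bd' h hm hb y
    by_cases hy : y ∈ K2
    · rw [Set.indicator_of_mem hy, mul_one] at h1 ⊢
      nlinarith [abs_nonneg (∫ x, h (x, y)), sq_abs (∫ x, h (x, y))]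
    · rw [Set.indicator_of_notMem hy, mul_zero] at h1 ⊢
      nlinarith [abs_nonneg (∫ x, h (x, y)), sq_abs (∫ x, h (x, y))]
  -- product integrability tools
  have hbar_le' : ∀ p : (Fin m → ℝ) × (Fin n → ℝ),
      hbar p ≤ K1.indicator (fun _ => C) p.1 * K2.indicator (fun _ => (1:ℝ)) p.2 := by
    intro p
    by_cases hp : p ∈ K
    · rw [Set.indicator_of_mem (Set.mem_image_of_mem Prod.fst hp),
        Set.indicator_of_mem (Set.mem_image_of_mem Prod.snd hp), mul_one]
      exact hC p
    · rw [hbar0 p hp]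
      exact mul_nonneg (Set.indicator_apply_nonneg fun _ => hC0)
        (Set.indicator_apply_nonneg fun _ => zero_le_one)
  have prod_int_fst : ∀ (F : (Fin m → ℝ) → ℝ), Measurable F →
      Integrable (fun x => |F x| * K1.indicator (fun _ => (1:ℝ)) x) →
      ∀ (h : (Fin m → ℝ) × (Fin n → ℝ) → ℝ), AEStronglyMeasurable h volume →
      (∀ p, |h p| ≤ hbar p) → Integrable (fun p => F p.1 * h p) := by
    intro F hF hFint h hm hb
    refine ((hFint.mul_prod indC2_int).mono'
      (((hF.comp measurable_fst).aestronglyMeasurable).mul hm)) ?_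
    filter_upwards with p
    simp only [Real.norm_eq_abs, Pi.mul_apply, Function.comp_apply, abs_mul]
    calc |F p.1| * |h p| ≤ |F p.1| * hbar p :=
          mul_le_mul_of_nonneg_left (hb p) (abs_nonneg _)
      _ ≤ |F p.1| * (K1.indicator (fun _ => (1:ℝ)) p.1 * K2.indicator (fun _ => C) p.2) :=
          mul_le_mul_of_nonneg_left (hbar_le p) (abs_nonneg _)
      _ = |F p.1| * K1.indicator (fun _ => (1:ℝ)) p.1 * K2.indicator (fun _ => C) p.2 := by ring
  have prod_int_snd : ∀ (G : (Fin n → ℝ) → ℝ), Measurable G →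
      Integrable (fun y => |G y| * K2.indicator (fun _ => (1:ℝ)) y) →
      ∀ (h : (Fin m → ℝ) × (Fin n → ℝ) → ℝ), AEStronglyMeasurable h volume →
      (∀ p, |h p| ≤ hbar p) → Integrable (fun p => G p.2 * h p) := by
    intro G hG hGint h hm hb
    refine ((indC1_int.mul_prod hGint).mono'
      (((hG.comp measurable_snd).aestronglyMeasurable).mul hm)) ?_
    filter_upwards with p
    simp only [Real.norm_eq_abs, Pi.mul_apply, Function.comp_apply, abs_mul]
    calc |G p.2| * |h p| ≤ |G p.2| * hbar p :=
          mul_le_mul_of_nonneg_left (hb p) (abs_nonneg _)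
      _ ≤ |G p.2| * (K1.indicator (fun _ => C) p.1 * K2.indicator (fun _ => (1:ℝ)) p.2) :=
          mul_le_mul_of_nonneg_left (hbar_le' p) (abs_nonneg _)
      _ = K1.indicator (fun _ => C) p.1 * (|G p.2| * K2.indicator (fun _ => (1:ℝ)) p.2) := by ring
  have hKm : MeasurableSet K := hKcl.measurableSet
  have cK_int : Integrable (K.indicator c) :=
    (c_locint.integrableOn_isCompact hKcpt).integrable_indicator hKm
  have c_prod_int : ∀ (h : (Fin m → ℝ) × (Fin n → ℝ) → ℝ), AEStronglyMeasurable h volume →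
      (∀ p, |h p| ≤ hbar p) → Integrable (fun p => c p * h p) := by
    intro h hm hb
    refine (cK_int.abs.const_mul C).mono' (c_locint.aestronglyMeasurable.mul hm) ?_
    filter_upwards with p
    simp only [Real.norm_eq_abs, Pi.mul_apply, Function.comp_apply, abs_mul]
    by_cases hp : p ∈ K
    · rw [Set.indicator_of_mem hp]
      calc |c p| * |h p| ≤ |c p| * C :=
            mul_le_mul_of_nonneg_left ((hb p).trans (hC p)) (abs_nonneg _)
        _ = C * |c p| := mul_comm _ _
    · have h0 : |h p| ≤ 0 := (hb p).trans_eq (hbar0 p hp)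
      have hz : h p = 0 := abs_eq_zero.mp (le_antisymm h0 (abs_nonneg _))
      rw [hz, abs_zero, mul_zero]
      positivity
  -- SECTION C: hepsfn and its marginals, uε, vε
  have heps_meas : Measurable hepsfn := by rw [heps_def]; exact hbar_meas.indicator Wε_meas
  have heps_nonneg : ∀ p, 0 ≤ hepsfn p := by
    intro p; rw [heps_def]; exact Set.indicator_apply_nonneg fun _ => hbar_nonneg p
  have heps_le : ∀ p, hepsfn p ≤ hbar p := by
    intro p; rw [heps_def]
    exact Set.indicator_apply_le' (fun _ => le_refl _) (fun _ => hbar_nonneg p)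
  have heps_abs : ∀ p, |hepsfn p| ≤ hbar p := fun p => by
    rw [abs_of_nonneg (heps_nonneg p)]; exact heps_le p
  set Hx : (Fin m → ℝ) → ℝ := fun x => ∫ y, hepsfn (x, y) with hHxdef
  set Hy : (Fin n → ℝ) → ℝ := fun y => ∫ x, hepsfn (x, y) with hHydef
  have Hx_meas : Measurable Hx := marg_meas _ heps_meas
  have Hy_meas : Measurable Hy := marg_meas' _ heps_meas
  have Hx_int : Integrable Hx := marg_int _ heps_meas heps_abs
  have Hy_int : Integrable Hy := marg_int' _ heps_meas heps_abs
  have Hx_sq_int : Integrable (fun x => Hx x ^ 2) := marg_sq_int _ heps_meas heps_abs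
  have Hy_sq_int : Integrable (fun y => Hy y ^ 2) := marg_sq_int' _ heps_meas heps_abs
  have Hx_bd : ∀ x, |Hx x| ≤ M * K1.indicator (fun _ => (1:ℝ)) x := marg_bd _ heps_meas heps_abs
  have Hy_bd : ∀ y, |Hy y| ≤ M' * K2.indicator (fun _ => (1:ℝ)) y := marg_bd' _ heps_meas heps_abs
  have Hx_f_int : Integrable (fun x => Hx x * f x) := by
    refine (f_int.const_mul M).mono' (Hx_meas.mul f_meas).aestronglyMeasurable ?_
    filter_upwards with x
    rw [Real.norm_eq_abs, abs_mul, abs_of_nonneg (f_nonneg x)]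
    refine mul_le_mul_of_nonneg_right ((Hx_bd x).trans ?_) (f_nonneg x)
    by_cases hx : x ∈ K1
    · rw [Set.indicator_of_mem hx, mul_one]
    · rw [Set.indicator_of_notMem hx, mul_zero]; exact hM0
  have Hy_g_int : Integrable (fun y => Hy y * g y) := by
    refine (g_int.const_mul M').mono' (Hy_meas.mul g_meas).aestronglyMeasurable ?_
    filter_upwards with y
    rw [Real.norm_eq_abs, abs_mul, abs_of_nonneg (g_nonneg y)]
    refine mul_le_mul_of_nonneg_right ((Hy_bd y).trans ?_) (g_nonneg y)
    by_cases hy : y ∈ K2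
    · rw [Set.indicator_of_mem hy, mul_one]
    · rw [Set.indicator_of_notMem hy, mul_zero]; exact hM'0
  have hεne : (ε:ℝ) ≠ 0 := ne_of_gt hε
  have hfHx_eq : ∀ x, Hx x - f x = ε * uε x := by
    intro x; rw [uε_def x]; field_simp; rfl
  have hgHy_eq : ∀ y, Hy y - g y = ε * vε y := by
    intro y; rw [vε_def y]; field_simp; rfl
  have ue_eq : uε = fun x => (1/ε) * (Hx x - f x) := funext fun x => uε_def x
  have ve_eq : vε = fun y => (1/ε) * (Hy y - g y) := funext fun y => vε_def y
  have ue_meas : Measurable uε := by rw [ue_eq]; exact ((Hx_meas.sub f_meas).const_mul _)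
  have ve_meas : Measurable vε := by rw [ve_eq]; exact ((Hy_meas.sub g_meas).const_mul _)
  have ue_int : Integrable uε := by rw [ue_eq]; exact ((Hx_int.sub f_int).const_mul _)
  have ve_int : Integrable vε := by rw [ve_eq]; exact ((Hy_int.sub g_int).const_mul _)
  have ue_sq_int : Integrable (fun x => uε x ^ 2) := by
    have hrw : (fun x => uε x ^ 2)
        = fun x => (1/ε)^2 * (Hx x ^ 2 - 2 * (Hx x * f x) + f x ^ 2) := by
      funext x; rw [uε_def x]; ring
    rw [hrw]
    exact (((Hx_sq_int.sub (Hx_f_int.const_mul 2)).add f_sq_int).const_mul _)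
  have ve_sq_int : Integrable (fun y => vε y ^ 2) := by
    have hrw : (fun y => vε y ^ 2)
        = fun y => (1/ε)^2 * (Hy y ^ 2 - 2 * (Hy y * g y) + g y ^ 2) := by
      funext y; rw [vε_def y]; ring
    rw [hrw]
    exact (((Hy_sq_int.sub (Hy_g_int.const_mul 2)).add g_sq_int).const_mul _)
  have ue_f_int : Integrable (fun x => uε x * f x) := by
    have hrw : (fun x => uε x * f x) = fun x => (1/ε) * (Hx x * f x - f x ^ 2) := by
      funext x; rw [uε_def x]; ring
    rw [hrw]; exact ((Hx_f_int.sub f_sq_int).const_mul _)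
  have ve_g_int : Integrable (fun y => vε y * g y) := by
    have hrw : (fun y => vε y * g y) = fun y => (1/ε) * (Hy y * g y - g y ^ 2) := by
      funext y; rw [vε_def y]; ring
    rw [hrw]; exact ((Hy_g_int.sub g_sq_int).const_mul _)
  have ue_Hx_int : Integrable (fun x => uε x * Hx x) := by
    have hrw : (fun x => uε x * Hx x) = fun x => (1/ε) * (Hx x ^ 2 - Hx x * f x) := by
      funext x; rw [uε_def x]; ring
    rw [hrw]; exact ((Hx_sq_int.sub Hx_f_int).const_mul _)
  have ve_Hy_int : Integrable (fun y => vε y * Hy y) := by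
    have hrw : (fun y => vε y * Hy y) = fun y => (1/ε) * (Hy y ^ 2 - Hy y * g y) := by
      funext y; rw [vε_def y]; ring
    rw [hrw]; exact ((Hy_sq_int.sub Hy_g_int).const_mul _)
  have ue_ind_int : Integrable (fun x => |uε x| * K1.indicator (fun _ => (1:ℝ)) x) := by
    refine ue_int.abs.mono'
      ((ue_meas.abs.mul (measurable_const.indicator hK1m)).aestronglyMeasurable) ?_
    filter_upwards with x
    have h0 : (0:ℝ) ≤ K1.indicator (fun _ => (1:ℝ)) x :=
      Set.indicator_apply_nonneg fun _ => zero_le_one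
    rw [Real.norm_eq_abs, abs_of_nonneg (mul_nonneg (abs_nonneg (uε x)) h0)]
    by_cases hx : x ∈ K1
    · rw [Set.indicator_of_mem hx, mul_one]
    · rw [Set.indicator_of_notMem hx, mul_zero]; exact abs_nonneg _
  have ve_ind_int : Integrable (fun y => |vε y| * K2.indicator (fun _ => (1:ℝ)) y) := by
    refine ve_int.abs.mono'
      ((ve_meas.abs.mul (measurable_const.indicator hK2m)).aestronglyMeasurable) ?_
    filter_upwards with y
    have h0 : (0:ℝ) ≤ K2.indicator (fun _ => (1:ℝ)) y :=
      Set.indicator_apply_nonneg fun _ => zero_le_one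
    rw [Real.norm_eq_abs, abs_of_nonneg (mul_nonneg (abs_nonneg (vε y)) h0)]
    by_cases hy : y ∈ K2
    · rw [Set.indicator_of_mem hy, mul_one]
    · rw [Set.indicator_of_notMem hy, mul_zero]; exact abs_nonneg _
  have Iue_he : Integrable (fun p => uε p.1 * hepsfn p) :=
    prod_int_fst uε ue_meas ue_ind_int hepsfn heps_meas.aestronglyMeasurable heps_abs
  have Fue_he : (∫ p, uε p.1 * hepsfn p) = ∫ x, uε x * Hx x := fubini_fst' uε hepsfn Iue_he
  have Ive_he : Integrable (fun p => vε p.2 * hepsfn p) :=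
    prod_int_snd vε ve_meas ve_ind_int hepsfn heps_meas.aestronglyMeasurable heps_abs
  have Fve_he : (∫ p, vε p.2 * hepsfn p) = ∫ y, vε y * Hy y := fubini_snd' vε hepsfn Ive_he
  have Ic_he : Integrable (fun p => c p * hepsfn p) :=
    c_prod_int hepsfn heps_meas.aestronglyMeasurable heps_abs
  -- SECTION D: measurable version of c, the set S, competitor hstar, variational argument
  have hc_aesm : AEStronglyMeasurable c volume := c_locint.aestronglyMeasurable
  set c' : (Fin m → ℝ) × (Fin n → ℝ) → ℝ := AEStronglyMeasurable.mk c hc_aesm with hc'def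
  have hc'_meas : Measurable c' := hc_aesm.stronglyMeasurable_mk.measurable
  have hcc' : c =ᵐ[volume] c' := hc_aesm.ae_eq_mk
  set ψ : (Fin m → ℝ) × (Fin n → ℝ) → ℝ := fun p => c' p + uε p.1 + vε p.2 with hψdef
  have ψ_meas : Measurable ψ :=
    (hc'_meas.add (ue_meas.comp measurable_fst)).add (ve_meas.comp measurable_snd)
  set S : Set ((Fin m → ℝ) × (Fin n → ℝ)) := {p | ψ p < 0} with hSdef
  have hSm : MeasurableSet S := measurableSet_lt ψ_meas measurable_const
  set hstar : (Fin m → ℝ) × (Fin n → ℝ) → ℝ := S.indicator hbar with hhstardef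
  have hstar_meas : Measurable hstar := hbar_meas.indicator hSm
  have hstar_nonneg : ∀ p, 0 ≤ hstar p := fun p =>
    Set.indicator_apply_nonneg fun _ => hbar_nonneg p
  have hstar_le : ∀ p, hstar p ≤ hbar p := fun p =>
    Set.indicator_apply_le' (fun _ => le_refl _) (fun _ => hbar_nonneg p)
  have hstar_abs : ∀ p, |hstar p| ≤ hbar p := fun p => by
    rw [abs_of_nonneg (hstar_nonneg p)]; exact hstar_le p
  set d : (Fin m → ℝ) × (Fin n → ℝ) → ℝ := fun p => hstar p - hepsfn p with hddef
  have d_meas : Measurable d := hstar_meas.sub heps_meas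
  have d_abs : ∀ p, |d p| ≤ hbar p := by
    intro p
    have h1 := heps_nonneg p; have h2 := heps_le p
    have h3 := hstar_nonneg p; have h4 := hstar_le p
    refine abs_le.mpr ⟨?_, ?_⟩
    · show -hbar p ≤ hstar p - hepsfn p; linarith
    · show hstar p - hepsfn p ≤ hbar p; linarith
  set Qx : (Fin m → ℝ) → ℝ := fun x => ∫ y, d (x, y) with hQxdef
  set Qy : (Fin n → ℝ) → ℝ := fun y => ∫ x, d (x, y) with hQydef
  have Qx_meas : Measurable Qx := marg_meas _ d_meas
  have Qy_meas : Measurable Qy := marg_meas' _ d_meas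
  have Qx_int : Integrable Qx := marg_int _ d_meas d_abs
  have Qy_int : Integrable Qy := marg_int' _ d_meas d_abs
  have Qx_sq_int : Integrable (fun x => Qx x ^ 2) := marg_sq_int _ d_meas d_abs
  have Qy_sq_int : Integrable (fun y => Qy y ^ 2) := marg_sq_int' _ d_meas d_abs
  have ue_Qx_int : Integrable (fun x => uε x * Qx x) := by
    refine ((ue_sq_int.add Qx_sq_int).const_mul (1/2)).mono'
      (ue_meas.mul Qx_meas).aestronglyMeasurable ?_
    filter_upwards with x
    simp only [Pi.add_apply]
    rw [Real.norm_eq_abs, abs_mul]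
    nlinarith [sq_nonneg (|uε x| - |Qx x|), sq_abs (uε x), sq_abs (Qx x),
      abs_nonneg (uε x), abs_nonneg (Qx x)]
  have ve_Qy_int : Integrable (fun y => vε y * Qy y) := by
    refine ((ve_sq_int.add Qy_sq_int).const_mul (1/2)).mono'
      (ve_meas.mul Qy_meas).aestronglyMeasurable ?_
    filter_upwards with y
    simp only [Pi.add_apply]
    rw [Real.norm_eq_abs, abs_mul]
    nlinarith [sq_nonneg (|vε y| - |Qy y|), sq_abs (vε y), sq_abs (Qy y),
      abs_nonneg (vε y), abs_nonneg (Qy y)]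
  have Icd : Integrable (fun p => c p * d p) :=
    c_prod_int d d_meas.aestronglyMeasurable d_abs
  have Iue_d : Integrable (fun p => uε p.1 * d p) :=
    prod_int_fst uε ue_meas ue_ind_int d d_meas.aestronglyMeasurable d_abs
  have Ive_d : Integrable (fun p => vε p.2 * d p) :=
    prod_int_snd vε ve_meas ve_ind_int d d_meas.aestronglyMeasurable d_abs
  have Fue_d : (∫ p, uε p.1 * d p) = ∫ x, uε x * Qx x := fubini_fst' uε d Iue_d
  have Fve_d : (∫ p, vε p.2 * d p) = ∫ y, vε y * Qy y := fubini_snd' vε d Ive_d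
  have Fcd : (∫ p, c p * d p) = ∫ p, c' p * d p :=
    integral_congr_ae (hcc'.mono fun p hp => by dsimp only; rw [hp])
  have Ic'd : Integrable (fun p => c' p * d p) :=
    Icd.congr (hcc'.mono fun p hp => by dsimp only; rw [hp])
  -- integrability of squared linearized marginals
  have Pint_x : Integrable (fun x => (Hx x - f x) ^ 2) := by
    have hrw : (fun x => (Hx x - f x) ^ 2) = fun x => ε ^ 2 * uε x ^ 2 := by
      funext x; rw [hfHx_eq x]; ring
    rw [hrw]; exact ue_sq_int.const_mul _
  have Pint_y : Integrable (fun y => (Hy y - g y) ^ 2) := by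
    have hrw : (fun y => (Hy y - g y) ^ 2) = fun y => ε ^ 2 * vε y ^ 2 := by
      funext y; rw [hgHy_eq y]; ring
    rw [hrw]; exact ve_sq_int.const_mul _
  have costheps : relaxedCost m n ε c f g hepsfn
      = (∫ p, c p * hepsfn p) + (1/(2*ε)) * (∫ x, (Hx x - f x) ^ 2)
        + (1/(2*ε)) * (∫ y, (Hy y - g y) ^ 2) := rfl
  -- the variational inequality
  have key : ∀ t : ℝ, 0 < t → t ≤ 1 →
      0 ≤ t * ((∫ p, c p * d p) + (∫ x, uε x * Qx x) + (∫ y, vε y * Qy y))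
        + t ^ 2 * ((1/(2*ε)) * ((∫ x, Qx x ^ 2) + (∫ y, Qy y ^ 2))) := by
    intro t ht0 ht1
    have hfeas : ∀ᵐ p : (Fin m → ℝ) × (Fin n → ℝ),
        0 ≤ hepsfn p + t * d p ∧ hepsfn p + t * d p ≤ hbar p := by
      filter_upwards with p
      have h1 := heps_nonneg p; have h2 := heps_le p
      have h3 := hstar_nonneg p; have h4 := hstar_le p
      have hd : d p = hstar p - hepsfn p := rfl
      constructor <;> nlinarith
    have hmin := heps_min (fun p => hepsfn p + t * d p)
      (heps_meas.add (d_meas.const_mul t)) hfeas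
    have e1 : (∫ p, c p * (hepsfn p + t * d p))
        = (∫ p, c p * hepsfn p) + t * ∫ p, c p * d p := by
      have hrw : (fun p => c p * (hepsfn p + t * d p))
          = fun p => c p * hepsfn p + t * (c p * d p) := by funext p; ring
      have j1 : Integrable (fun p => t * (c p * d p)) := Icd.const_mul t
      rw [hrw, integral_add Ic_he j1, integral_const_mul]
    have e2 : ∀ x, (∫ y, (hepsfn (x, y) + t * d (x, y))) = Hx x + t * Qx x := by
      intro x
      rw [integral_add (fiber_int hepsfn heps_meas heps_abs x)
        ((fiber_int d d_meas d_abs x).const_mul t), integral_const_mul]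
    have e2' : ∀ y, (∫ x, (hepsfn (x, y) + t * d (x, y))) = Hy y + t * Qy y := by
      intro y
      rw [integral_add (fiber_int' hepsfn heps_meas heps_abs y)
        ((fiber_int' d d_meas d_abs y).const_mul t), integral_const_mul]
    have e3 : (∫ x, ((Hx x + t * Qx x) - f x) ^ 2)
        = (∫ x, (Hx x - f x) ^ 2) + (t * (2*ε)) * (∫ x, uε x * Qx x)
          + t ^ 2 * (∫ x, Qx x ^ 2) := by
      have hrw : (fun x => ((Hx x + t * Qx x) - f x) ^ 2)
          = fun x => (Hx x - f x) ^ 2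
            + ((t * (2*ε)) * (uε x * Qx x) + t ^ 2 * (Qx x ^ 2)) := by
        funext x
        have h := hfHx_eq x
        have hfx : Hx x = f x + ε * uε x := by linarith
        rw [hfx]; ring
      have i2 : Integrable (fun x => (t * (2*ε)) * (uε x * Qx x)) := ue_Qx_int.const_mul _
      have i3 : Integrable (fun x => t ^ 2 * (Qx x ^ 2)) := Qx_sq_int.const_mul _
      have i1 : Integrable (fun x => (t * (2*ε)) * (uε x * Qx x) + t ^ 2 * (Qx x ^ 2)) :=
        i2.add i3
      rw [hrw, integral_add Pint_x i1, integral_add i2 i3,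
        integral_const_mul, integral_const_mul]
      ring
    have e3' : (∫ y, ((Hy y + t * Qy y) - g y) ^ 2)
        = (∫ y, (Hy y - g y) ^ 2) + (t * (2*ε)) * (∫ y, vε y * Qy y)
          + t ^ 2 * (∫ y, Qy y ^ 2) := by
      have hrw : (fun y => ((Hy y + t * Qy y) - g y) ^ 2)
          = fun y => (Hy y - g y) ^ 2
            + ((t * (2*ε)) * (vε y * Qy y) + t ^ 2 * (Qy y ^ 2)) := by
        funext y
        have h := hgHy_eq y
        have hgy : Hy y = g y + ε * vε y := by linarith
        rw [hgy]; ring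
      have i2 : Integrable (fun y => (t * (2*ε)) * (vε y * Qy y)) := ve_Qy_int.const_mul _
      have i3 : Integrable (fun y => t ^ 2 * (Qy y ^ 2)) := Qy_sq_int.const_mul _
      have i1 : Integrable (fun y => (t * (2*ε)) * (vε y * Qy y) + t ^ 2 * (Qy y ^ 2)) :=
        i2.add i3
      rw [hrw, integral_add Pint_y i1, integral_add i2 i3,
        integral_const_mul, integral_const_mul]
      ring
    have costpert : relaxedCost m n ε c f g (fun p => hepsfn p + t * d p)
        = (∫ p, c p * (hepsfn p + t * d p))
          + (1/(2*ε)) * (∫ x, ((∫ y, (hepsfn (x, y) + t * d (x, y))) - f x) ^ 2)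
          + (1/(2*ε)) * (∫ y, ((∫ x, (hepsfn (x, y) + t * d (x, y))) - g y) ^ 2) := rfl
    have hm1 : (fun x => ((∫ y, (hepsfn (x, y) + t * d (x, y))) - f x) ^ 2)
        = fun x => ((Hx x + t * Qx x) - f x) ^ 2 := by
      funext x; rw [e2 x]
    have hm2 : (fun y => ((∫ x, (hepsfn (x, y) + t * d (x, y))) - g y) ^ 2)
        = fun y => ((Hy y + t * Qy y) - g y) ^ 2 := by
      funext y; rw [e2' y]
    rw [costpert, e1] at hmin
    rw [show (∫ x, ((∫ y, (hepsfn (x, y) + t * d (x, y))) - f x) ^ 2)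
        = ∫ x, ((Hx x + t * Qx x) - f x) ^ 2 from by rw [hm1]] at hmin
    rw [show (∫ y, ((∫ x, (hepsfn (x, y) + t * d (x, y))) - g y) ^ 2)
        = ∫ y, ((Hy y + t * Qy y) - g y) ^ 2 from by rw [hm2]] at hmin
    rw [e3, e3', costheps] at hmin
    have expx : (1/(2*ε)) * ((∫ x, (Hx x - f x) ^ 2) + (t * (2*ε)) * (∫ x, uε x * Qx x)
          + t ^ 2 * (∫ x, Qx x ^ 2))
        = (1/(2*ε)) * (∫ x, (Hx x - f x) ^ 2) + t * (∫ x, uε x * Qx x)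
          + t ^ 2 * ((1/(2*ε)) * (∫ x, Qx x ^ 2)) := by
      field_simp
    have expy : (1/(2*ε)) * ((∫ y, (Hy y - g y) ^ 2) + (t * (2*ε)) * (∫ y, vε y * Qy y)
          + t ^ 2 * (∫ y, Qy y ^ 2))
        = (1/(2*ε)) * (∫ y, (Hy y - g y) ^ 2) + t * (∫ y, vε y * Qy y)
          + t ^ 2 * ((1/(2*ε)) * (∫ y, Qy y ^ 2)) := by
      field_simp
    rw [expx, expy] at hmin
    linarith
  have hB0 : 0 ≤ (1/(2*ε)) * ((∫ x, Qx x ^ 2) + (∫ y, Qy y ^ 2)) := by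
    have h1 : 0 ≤ ∫ x, Qx x ^ 2 := integral_nonneg fun x => sq_nonneg _
    have h2 : 0 ≤ ∫ y, Qy y ^ 2 := integral_nonneg fun y => sq_nonneg _
    have h3 : (0:ℝ) ≤ 1/(2*ε) := by positivity
    nlinarith
  have hA : 0 ≤ (∫ p, c p * d p) + (∫ x, uε x * Qx x) + (∫ y, vε y * Qy y) :=
    nonneg_of_quadratic hB0 key
  have psi_d_split : (∫ p, ψ p * d p)
      = (∫ p, c' p * d p) + ((∫ p, uε p.1 * d p) + (∫ p, vε p.2 * d p)) := by
    have hrw : (fun p => ψ p * d p)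
        = fun p => c' p * d p + (uε p.1 * d p + vε p.2 * d p) := by
      funext p
      show (c' p + uε p.1 + vε p.2) * d p = _
      ring
    have j1 : Integrable (fun p => uε p.1 * d p + vε p.2 * d p) := Iue_d.add Ive_d
    rw [hrw, integral_add Ic'd j1, integral_add Iue_d Ive_d]
  have EL : 0 ≤ ∫ p, ψ p * d p := by
    rw [psi_d_split, ← Fcd, Fue_d, Fve_d]; linarith
  have EL2 : (∫ p, ψ p * d p) ≤ 0 := by
    apply integral_nonpos
    intro p
    show ψ p * d p ≤ 0
    by_cases hp : ψ p < 0
    · have hpS : p ∈ S := hp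
      have hs : hstar p = hbar p := Set.indicator_of_mem hpS hbar
      have hd : d p = hbar p - hepsfn p := by show hstar p - hepsfn p = _; rw [hs]
      rw [hd]
      nlinarith [mul_nonneg (neg_nonneg.mpr hp.le) (sub_nonneg.mpr (heps_le p))]
    · push_neg at hp
      have hpS : p ∉ S := fun h => absurd (h : ψ p < 0) (not_lt.mpr hp)
      have hs : hstar p = 0 := Set.indicator_of_notMem hpS hbar
      have hd : d p = 0 - hepsfn p := by show hstar p - hepsfn p = _; rw [hs]
      rw [hd]
      nlinarith [mul_nonneg hp (heps_nonneg p)]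
  have Zero : (∫ p, ψ p * d p) = 0 := le_antisymm EL2 EL
  -- splitting ∫ ψ hepsfn and ∫ ψ hstar
  have Ic_hstar : Integrable (fun p => c p * hstar p) :=
    c_prod_int hstar hstar_meas.aestronglyMeasurable hstar_abs
  have Ic'_hstar : Integrable (fun p => c' p * hstar p) :=
    Ic_hstar.congr (hcc'.mono fun p hp => by dsimp only; rw [hp])
  have Ic'_he : Integrable (fun p => c' p * hepsfn p) :=
    Ic_he.congr (hcc'.mono fun p hp => by dsimp only; rw [hp])
  have Iue_hstar : Integrable (fun p => uε p.1 * hstar p) :=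
    prod_int_fst uε ue_meas ue_ind_int hstar hstar_meas.aestronglyMeasurable hstar_abs
  have Ive_hstar : Integrable (fun p => vε p.2 * hstar p) :=
    prod_int_snd vε ve_meas ve_ind_int hstar hstar_meas.aestronglyMeasurable hstar_abs
  have psi_he_int : Integrable (fun p => ψ p * hepsfn p) := by
    have hrw : (fun p => ψ p * hepsfn p)
        = fun p => c' p * hepsfn p + (uε p.1 * hepsfn p + vε p.2 * hepsfn p) := by
      funext p
      show (c' p + uε p.1 + vε p.2) * hepsfn p = _
      ring
    rw [hrw]; exact Ic'_he.add (Iue_he.add Ive_he)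
  have psi_hstar_int : Integrable (fun p => ψ p * hstar p) := by
    have hrw : (fun p => ψ p * hstar p)
        = fun p => c' p * hstar p + (uε p.1 * hstar p + vε p.2 * hstar p) := by
      funext p
      show (c' p + uε p.1 + vε p.2) * hstar p = _
      ring
    rw [hrw]; exact Ic'_hstar.add (Iue_hstar.add Ive_hstar)
  have psi_diff : (∫ p, ψ p * hstar p) - (∫ p, ψ p * hepsfn p) = ∫ p, ψ p * d p := by
    rw [← integral_sub psi_hstar_int psi_he_int]
    congr 1
    funext p
    show ψ p * hstar p - ψ p * hepsfn p = ψ p * (hstar p - hepsfn p)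
    ring
  have key_eq : (∫ p, ψ p * hstar p) = ∫ p, ψ p * hepsfn p := by
    have := psi_diff
    rw [Zero] at this
    linarith
  have Fc_he : (∫ p, c p * hepsfn p) = ∫ p, c' p * hepsfn p :=
    integral_congr_ae (hcc'.mono fun p hp => by dsimp only; rw [hp])
  have psi_he_split : (∫ p, ψ p * hepsfn p)
      = (∫ p, c p * hepsfn p) + (∫ p, uε p.1 * hepsfn p) + (∫ p, vε p.2 * hepsfn p) := by
    have hrw : (fun p => ψ p * hepsfn p)
        = fun p => c' p * hepsfn p + (uε p.1 * hepsfn p + vε p.2 * hepsfn p) := by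
      funext p
      show (c' p + uε p.1 + vε p.2) * hepsfn p = _
      ring
    have j1 : Integrable (fun p => uε p.1 * hepsfn p + vε p.2 * hepsfn p) := Iue_he.add Ive_he
    rw [hrw, integral_add Ic'_he j1, integral_add Iue_he Ive_he, ← Fc_he]
    ring
  have wbar_eq : (∫ p, wε p * hbar p) = ∫ p, ψ p * hstar p := by
    refine integral_congr_ae ?_
    filter_upwards [hcc'] with p hp
    rw [wε_def p]
    have hcalc : c p + uε p.1 + vε p.2 = ψ p := by
      show _ = c' p + uε p.1 + vε p.2
      rw [hp]
    by_cases hps : ψ p < 0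
    · have hpS : p ∈ S := hps
      rw [hcalc, min_eq_left hps.le,
        show hstar p = hbar p from Set.indicator_of_mem hpS hbar]
    · push_neg at hps
      have hpS : p ∉ S := fun h => absurd (h : ψ p < 0) (not_lt.mpr hps)
      rw [hcalc, min_eq_right hps,
        show hstar p = 0 from Set.indicator_of_notMem hpS hbar,
        zero_mul, mul_zero]
  have Wval : (∫ p, wε p * hbar p)
      = (∫ p, c p * hepsfn p) + (∫ x, uε x * Hx x) + (∫ y, vε y * Hy y) := by
    rw [wbar_eq, key_eq, psi_he_split, Fue_he, Fve_he]
  -- SECTION E: conclusion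
  have hUx : (∫ x, (Hx x - f x) ^ 2) = ε ^ 2 * ∫ x, uε x ^ 2 := by
    rw [← integral_const_mul]
    congr 1; funext x; rw [hfHx_eq x]; ring
  have hUy : (∫ y, (Hy y - g y) ^ 2) = ε ^ 2 * ∫ y, vε y ^ 2 := by
    rw [← integral_const_mul]
    congr 1; funext y; rw [hgHy_eq y]; ring
  have cost_eq : relaxedCost m n ε c f g hepsfn
      = (∫ p, c p * hepsfn p) + (ε/2) * (∫ x, uε x ^ 2) + (ε/2) * (∫ y, vε y ^ 2) := by
    rw [costheps, hUx, hUy]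
    field_simp
  have uf_eq : (∫ x, uε x * f x) = (∫ x, uε x * Hx x) - ε * (∫ x, uε x ^ 2) := by
    have i1 : Integrable (fun x => ε * uε x ^ 2) := ue_sq_int.const_mul ε
    rw [← integral_const_mul, ← integral_sub ue_Hx_int i1]
    congr 1; funext x
    have h := hfHx_eq x
    have hfx : f x = Hx x - ε * uε x := by linarith only [h]
    rw [hfx]; ring
  have vg_eq : (∫ y, vε y * g y) = (∫ y, vε y * Hy y) - ε * (∫ y, vε y ^ 2) := by
    have i1 : Integrable (fun y => ε * vε y ^ 2) := ve_sq_int.const_mul ε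
    rw [← integral_const_mul, ← integral_sub ve_Hy_int i1]
    congr 1; funext y
    have h := hgHy_eq y
    have hgy : g y = Hy y - ε * vε y := by linarith only [h]
    rw [hgy]; ring
  have part1 : relaxedCost m n ε c f g hepsfn = relaxedDual m n ε hbar f g uε vε wε := by
    rw [cost_eq]
    show _ = -(∫ x, uε x * f x) - (∫ y, vε y * g y) + (∫ p, wε p * hbar p)
      - (ε / 2) * (∫ x, (uε x) ^ 2) - (ε / 2) * (∫ y, (vε y) ^ 2)
    rw [uf_eq, vg_eq, Wval]
    ring
  refine ⟨part1, ?_⟩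
  intro u v w u_meas v_meas w_meas u_sq_int v_sq_int uf_int vg_int whbar_int hfeas hwnp
  rw [← part1, cost_eq]
  -- integrability facts for (u, v, w)
  have u_ind_int : Integrable (fun x => |u x| * K1.indicator (fun _ => (1:ℝ)) x) := by
    refine ((u_sq_int.add ind1_int).const_mul (1/2)).mono'
      ((u_meas.abs.mul (measurable_const.indicator hK1m)).aestronglyMeasurable) ?_
    filter_upwards with x
    simp only [Pi.add_apply]
    have h0 : (0:ℝ) ≤ K1.indicator (fun _ => (1:ℝ)) x :=
      Set.indicator_apply_nonneg fun _ => zero_le_one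
    rw [Real.norm_eq_abs, abs_of_nonneg (mul_nonneg (abs_nonneg (u x)) h0)]
    by_cases hx : x ∈ K1
    · rw [Set.indicator_of_mem hx]
      nlinarith only [sq_abs (u x), abs_nonneg (u x), sq_nonneg (|u x| - 1)]
    · rw [Set.indicator_of_notMem hx]
      nlinarith only [sq_nonneg (u x)]
  have v_ind_int : Integrable (fun y => |v y| * K2.indicator (fun _ => (1:ℝ)) y) := by
    refine ((v_sq_int.add ind2_int).const_mul (1/2)).mono'
      ((v_meas.abs.mul (measurable_const.indicator hK2m)).aestronglyMeasurable) ?_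
    filter_upwards with y
    simp only [Pi.add_apply]
    have h0 : (0:ℝ) ≤ K2.indicator (fun _ => (1:ℝ)) y :=
      Set.indicator_apply_nonneg fun _ => zero_le_one
    rw [Real.norm_eq_abs, abs_of_nonneg (mul_nonneg (abs_nonneg (v y)) h0)]
    by_cases hy : y ∈ K2
    · rw [Set.indicator_of_mem hy]
      nlinarith only [sq_abs (v y), abs_nonneg (v y), sq_nonneg (|v y| - 1)]
    · rw [Set.indicator_of_notMem hy]
      nlinarith only [sq_nonneg (v y)]
  have Iu_he : Integrable (fun p => u p.1 * hepsfn p) :=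
    prod_int_fst u u_meas u_ind_int hepsfn heps_meas.aestronglyMeasurable heps_abs
  have Iv_he : Integrable (fun p => v p.2 * hepsfn p) :=
    prod_int_snd v v_meas v_ind_int hepsfn heps_meas.aestronglyMeasurable heps_abs
  have Fu_he : (∫ p, u p.1 * hepsfn p) = ∫ x, u x * Hx x := fubini_fst' u hepsfn Iu_he
  have Fv_he : (∫ p, v p.2 * hepsfn p) = ∫ y, v y * Hy y := fubini_snd' v hepsfn Iv_he
  have Iw_he : Integrable (fun p => w p * hepsfn p) := by
    refine whbar_int.abs.mono' ((w_meas.mul heps_meas).aestronglyMeasurable) ?_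
    filter_upwards with p
    rw [Real.norm_eq_abs, abs_mul, abs_mul, abs_of_nonneg (heps_nonneg p),
      abs_of_nonneg (hbar_nonneg p)]
    exact mul_le_mul_of_nonneg_left (heps_le p) (abs_nonneg _)
  -- step (a): ∫ w hbar ≤ ∫ w hepsfn
  have step_a : (∫ p, w p * hbar p) ≤ ∫ p, w p * hepsfn p := by
    refine integral_mono_ae whbar_int Iw_he ?_
    filter_upwards [hwnp] with p hw
    exact mul_le_mul_of_nonpos_left (heps_le p) hw
  -- step (b): ∫ w hepsfn ≤ ∫ (c + u + v) hepsfn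
  have Iuv : Integrable (fun p => u p.1 * hepsfn p + v p.2 * hepsfn p) := Iu_he.add Iv_he
  have Isum : Integrable (fun p => c p * hepsfn p + (u p.1 * hepsfn p + v p.2 * hepsfn p)) :=
    Ic_he.add Iuv
  have step_b : (∫ p, w p * hepsfn p)
      ≤ (∫ p, c p * hepsfn p) + ((∫ p, u p.1 * hepsfn p) + (∫ p, v p.2 * hepsfn p)) := by
    have hmono : (∫ p, w p * hepsfn p)
        ≤ ∫ p, (c p * hepsfn p + (u p.1 * hepsfn p + v p.2 * hepsfn p)) := by
      refine integral_mono_ae Iw_he Isum ?_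
      filter_upwards [hfeas] with p hfp
      have h1 : w p ≤ c p + u p.1 + v p.2 := by linarith only [hfp]
      have h2 := heps_nonneg p
      linarith only [mul_le_mul_of_nonneg_right h1 h2]
    calc (∫ p, w p * hepsfn p)
        ≤ ∫ p, (c p * hepsfn p + (u p.1 * hepsfn p + v p.2 * hepsfn p)) := hmono
      _ = (∫ p, c p * hepsfn p) + ((∫ p, u p.1 * hepsfn p) + (∫ p, v p.2 * hepsfn p)) := by
          rw [integral_add Ic_he Iuv, integral_add Iu_he Iv_he]
  -- step (c)
  have u_ue_int : Integrable (fun x => u x * uε x) := by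
    refine ((u_sq_int.add ue_sq_int).const_mul (1/2)).mono'
      (u_meas.mul ue_meas).aestronglyMeasurable ?_
    filter_upwards with x
    simp only [Pi.add_apply]
    rw [Real.norm_eq_abs, abs_mul]
    nlinarith only [sq_nonneg (|u x| - |uε x|), sq_abs (u x), sq_abs (uε x),
      abs_nonneg (u x), abs_nonneg (uε x)]
  have v_ve_int : Integrable (fun y => v y * vε y) := by
    refine ((v_sq_int.add ve_sq_int).const_mul (1/2)).mono'
      (v_meas.mul ve_meas).aestronglyMeasurable ?_
    filter_upwards with y
    simp only [Pi.add_apply]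
    rw [Real.norm_eq_abs, abs_mul]
    nlinarith only [sq_nonneg (|v y| - |vε y|), sq_abs (v y), sq_abs (vε y),
      abs_nonneg (v y), abs_nonneg (vε y)]
  have step_c : (∫ x, u x * Hx x) = (∫ x, u x * f x) + ε * ∫ x, u x * uε x := by
    have i1 : Integrable (fun x => ε * (u x * uε x)) := u_ue_int.const_mul ε
    rw [← integral_const_mul, ← integral_add uf_int i1]
    congr 1; funext x
    have h := hfHx_eq x
    have hfx : Hx x = f x + ε * uε x := by linarith only [h]
    rw [hfx]; ring
  have step_c' : (∫ y, v y * Hy y) = (∫ y, v y * g y) + ε * ∫ y, v y * vε y := by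
    have i1 : Integrable (fun y => ε * (v y * vε y)) := v_ve_int.const_mul ε
    rw [← integral_const_mul, ← integral_add vg_int i1]
    congr 1; funext y
    have h := hgHy_eq y
    have hgy : Hy y = g y + ε * vε y := by linarith only [h]
    rw [hgy]; ring
  -- step (d): Young's inequality
  have step_d : (∫ x, u x * uε x) ≤ (1/2) * (∫ x, u x ^ 2) + (1/2) * (∫ y, uε y ^ 2) := by
    have i1 : Integrable (fun x => (1/2) * (u x ^ 2 + uε x ^ 2)) :=
      (u_sq_int.add ue_sq_int).const_mul (1/2)
    have h1 : (∫ x, u x * uε x) ≤ ∫ x, (1/2) * (u x ^ 2 + uε x ^ 2) := by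
      refine integral_mono u_ue_int i1 fun x => ?_
      nlinarith only [sq_nonneg (u x - uε x)]
    calc (∫ x, u x * uε x) ≤ ∫ x, (1/2) * (u x ^ 2 + uε x ^ 2) := h1
      _ = (1/2) * (∫ x, u x ^ 2) + (1/2) * (∫ y, uε y ^ 2) := by
          rw [integral_const_mul, integral_add u_sq_int ue_sq_int]; ring
  have step_d' : (∫ y, v y * vε y) ≤ (1/2) * (∫ y, v y ^ 2) + (1/2) * (∫ y, vε y ^ 2) := by
    have i1 : Integrable (fun y => (1/2) * (v y ^ 2 + vε y ^ 2)) :=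
      (v_sq_int.add ve_sq_int).const_mul (1/2)
    have h1 : (∫ y, v y * vε y) ≤ ∫ y, (1/2) * (v y ^ 2 + vε y ^ 2) := by
      refine integral_mono v_ve_int i1 fun y => ?_
      nlinarith only [sq_nonneg (v y - vε y)]
    calc (∫ y, v y * vε y) ≤ ∫ y, (1/2) * (v y ^ 2 + vε y ^ 2) := h1
      _ = (1/2) * (∫ y, v y ^ 2) + (1/2) * (∫ y, vε y ^ 2) := by
          rw [integral_const_mul, integral_add v_sq_int ve_sq_int]; ring
  -- assemble
  show -(∫ x, u x * f x) - (∫ y, v y * g y) + (∫ p, w p * hbar p)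
      - (ε / 2) * (∫ x, (u x) ^ 2) - (ε / 2) * (∫ y, (v y) ^ 2) ≤ _
  have hd1 : ε * (∫ x, u x * uε x) ≤ ε * ((1/2) * (∫ x, u x ^ 2) + (1/2) * (∫ y, uε y ^ 2)) :=
    mul_le_mul_of_nonneg_left step_d hε.le
  have hd2 : ε * (∫ y, v y * vε y) ≤ ε * ((1/2) * (∫ y, v y ^ 2) + (1/2) * (∫ y, vε y ^ 2)) :=
    mul_le_mul_of_nonneg_left step_d' hε.le
  have hchain : (∫ p, w p * hbar p)
      ≤ (∫ p, c p * hepsfn p) + (((∫ x, u x * f x) + ε * ∫ x, u x * uε x)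
        + ((∫ y, v y * g y) + ε * ∫ y, v y * vε y)) := by
    calc (∫ p, w p * hbar p) ≤ ∫ p, w p * hepsfn p := step_a
      _ ≤ (∫ p, c p * hepsfn p) + ((∫ p, u p.1 * hepsfn p) + (∫ p, v p.2 * hepsfn p)) := step_b
      _ = (∫ p, c p * hepsfn p) + ((∫ x, u x * Hx x) + (∫ y, v y * Hy y)) := by
          rw [Fu_he, Fv_he]
      _ = _ := by rw [step_c, step_c']
  linarith only [hchain, hd1, hd2]
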